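/- For every ε > 0, the function r(u) = erfc(u) − e^ε · erfc(√(u² + ε)) is strictly decreasing on the whole real line. -/

import Mathlib

open Real

/-- The Gauss error function `erf x = (2/√π) ∫₀ˣ e^{−t²} dt`. -/
noncomputable def erf (x : ℝ) : ℝ := 2 / Real.sqrt Real.pi * ∫ t in (0:ℝ)..x, Real.exp (-t ^ 2)

/-- The complementary error function `erfc x = 1 - erf x`. -/
noncomputable def erfc (x : ℝ) : ℝ := 1 - erf x

lemma erf_hasDerivAt (x : ℝ) :
    HasDerivAt erf (2 / Real.sqrt Real.pi * Real.exp (-x ^ 2)) x := by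
  have h : HasDerivAt (fun u : ℝ => ∫ t in (0:ℝ)..u, Real.exp (-t ^ 2))
      (Real.exp (-x ^ 2)) x :=
    (Continuous.integral_hasStrictDerivAt (by continuity) 0 x).hasDerivAt
  exact h.const_mul (2 / Real.sqrt Real.pi)

lemma erfc_hasDerivAt (x : ℝ) :
    HasDerivAt erfc (-(2 / Real.sqrt Real.pi * Real.exp (-x ^ 2))) x := by
  exact (erf_hasDerivAt x).const_sub 1

/-- For every `ε > 0`, the function `r u = erfc u − e^ε · erfc (√(u^2 + ε))` is strictly
decreasing on the whole real line. -/
theorem strictAnti_erfc_sub_exp_mul_erfc (ε : ℝ) (hε : 0 < ε) :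
    StrictAnti (fun u : ℝ => erfc u - Real.exp ε * erfc (Real.sqrt (u ^ 2 + ε))) := by
  have hc : 0 < 2 / Real.sqrt Real.pi := by positivity
  apply strictAnti_of_hasDerivAt_neg
    (f' := fun u => 2 / Real.sqrt Real.pi * Real.exp (-u ^ 2) *
      (u / Real.sqrt (u ^ 2 + ε) - 1))
  · intro x
    have hpos : 0 < x ^ 2 + ε := by positivity
    have hsq : Real.sqrt (x ^ 2 + ε) ^ 2 = x ^ 2 + ε := Real.sq_sqrt hpos.le
    have hsqrt_pos : 0 < Real.sqrt (x ^ 2 + ε) := Real.sqrt_pos.mpr hpos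
    -- derivative of inner: √(x²+ε)
    have hinner : HasDerivAt (fun u : ℝ => Real.sqrt (u ^ 2 + ε))
        (x / Real.sqrt (x ^ 2 + ε)) x := by
      have h1 : HasDerivAt (fun u : ℝ => u ^ 2 + ε) (2 * x) x := by
        simpa using (hasDerivAt_pow 2 x).add_const ε
      have h2 := (Real.hasDerivAt_sqrt hpos.ne').comp x h1
      refine h2.congr_deriv ?_
      symm
      field_simp
    have hcomp := (erfc_hasDerivAt (Real.sqrt (x ^ 2 + ε))).comp x hinner
    have hmain := ((erfc_hasDerivAt x).sub (hcomp.const_mul (Real.exp ε)))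
    refine hmain.congr_deriv ?_
    symm
    rw [hsq]
    have he : Real.exp ε * Real.exp (-(x ^ 2 + ε)) = Real.exp (-x ^ 2) := by
      rw [← Real.exp_add]; ring_nf
    linear_combination (-(2 / Real.sqrt Real.pi) * (x / Real.sqrt (x ^ 2 + ε))) * he
  · intro x
    have hpos : 0 < x ^ 2 + ε := by positivity
    have hlt : x / Real.sqrt (x ^ 2 + ε) < 1 := by
      have hsqrt_pos : 0 < Real.sqrt (x ^ 2 + ε) := Real.sqrt_pos.mpr hpos
      rw [div_lt_one hsqrt_pos]
      calc x ≤ |x| := le_abs_self x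
        _ = Real.sqrt (x ^ 2) := (Real.sqrt_sq_eq_abs x).symm
        _ < Real.sqrt (x ^ 2 + ε) := by
            apply Real.sqrt_lt_sqrt (sq_nonneg x); linarith
    have : 0 < 2 / Real.sqrt Real.pi * Real.exp (-x ^ 2) := by positivity
    nlinarith
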